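/- Let G=(V,A) be a loopless digraph and ℓ ≥ 1. A subset F' of the arcs of the subdivision digraph H'(ℓ) is a feedback arc set of H'(ℓ) if and only if the set {a ∈ A : F' ∩ P_a ≠ ∅} is a feedback arc set of G. -/

import Mathlib

/-- A digraph on vertex type `W` is given by its arc set `A ⊆ W × W`.
It is acyclic when the transitive closure of its arc relation is irreflexive
(equivalently, it has no cycle). -/
def Acyclic {W : Type*} (A : Set (W × W)) : Prop :=
  ∀ v : W, ¬ Relation.TransGen (fun u w => (u, w) ∈ A) v v

/-- `F` is a feedback arc set of the digraph with arc set `A`: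
`F ⊆ A` and the digraph `(V, A \ F)` is acyclic. -/
def IsFAS {W : Type*} (A F : Set (W × W)) : Prop :=
  F ⊆ A ∧ Acyclic (A \ F)

/-- The `i`-th node (for `0 ≤ i ≤ ℓ`) of the subdivision path replacing the arc
`a = (u,v)` in `H'(ℓ)`: node `0` is `u`, node `ℓ` is `v`, and the nodes in
between are the fresh vertices `a_1, …, a_{ℓ-1}`. -/
def HNode {V : Type*} (ℓ : ℕ) (a : V × V) (i : ℕ) : V ⊕ ((V × V) × ℕ) :=
  if i = 0 then Sum.inl a.1 else if i = ℓ then Sum.inl a.2 else Sum.inr (a, i)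

/-- The directed path `P_a` of `ℓ` arcs replacing the arc `a = (u,v)` in
`H'(ℓ)`: `(u,a_1), (a_1,a_2), …, (a_{ℓ-2},a_{ℓ-1}), (a_{ℓ-1},v)`
(for `ℓ = 1`, `P_a = {(u,v)}`). -/
def PathArcs {V : Type*} (ℓ : ℕ) (a : V × V) :
    Set ((V ⊕ ((V × V) × ℕ)) × (V ⊕ ((V × V) × ℕ))) :=
  { p | ∃ i < ℓ, p = (HNode ℓ a i, HNode ℓ a (i + 1)) }

/-- The arc set of the subdivision digraph `H'(ℓ)`: the union of the paths
`P_a` over all arcs `a` of `G`. -/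
def HArcs {V : Type*} (A : Set (V × V)) (ℓ : ℕ) :
    Set ((V ⊕ ((V × V) × ℕ)) × (V ⊕ ((V × V) × ℕ))) :=
  ⋃ a ∈ A, PathArcs ℓ a

section Aux

variable {V : Type*} {A : Set (V × V)} {ℓ : ℕ}
  {F' : Set ((V ⊕ ((V × V) × ℕ)) × (V ⊕ ((V × V) × ℕ)))}

lemma mem_HArcs_iff {p : (V ⊕ ((V × V) × ℕ)) × (V ⊕ ((V × V) × ℕ))} :
    p ∈ HArcs A ℓ ↔ ∃ a ∈ A, ∃ i < ℓ, p = (HNode ℓ a i, HNode ℓ a (i + 1)) := by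
  simp [HArcs, PathArcs]

lemma HNode_zero (a : V × V) : HNode ℓ a 0 = Sum.inl a.1 := by simp [HNode]

lemma HNode_last (hℓ : 1 ≤ ℓ) (a : V × V) : HNode ℓ a ℓ = Sum.inl a.2 := by
  rw [HNode, if_neg (by omega : ¬ℓ = 0), if_pos rfl]

lemma HNode_mid {i : ℕ} (h0 : i ≠ 0) (hi : i ≠ ℓ) (a : V × V) :
    HNode ℓ a i = Sum.inr (a, i) := by simp [HNode, h0, hi]

lemma HNode_eq_inr {a b : V × V} {i j : ℕ} (h : HNode ℓ b j = Sum.inr (a, i)) :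
    b = a ∧ j = i ∧ j ≠ 0 ∧ j ≠ ℓ := by
  unfold HNode at h
  by_cases h0 : j = 0
  · rw [if_pos h0] at h; exact absurd h (by simp)
  · rw [if_neg h0] at h
    by_cases h1 : j = ℓ
    · rw [if_pos h1] at h; exact absurd h (by simp)
    · rw [if_neg h1] at h
      simp only [Sum.inr.injEq, Prod.mk.injEq] at h
      exact ⟨h.1, h.2, h0, h1⟩

/-- Structure of an arc of `H'(ℓ)` leaving a subdivision vertex. -/
lemma arc_inr {x z : V ⊕ ((V × V) × ℕ)} {a : V × V} {i : ℕ}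
    (h : (x, z) ∈ HArcs A ℓ) (hx : x = Sum.inr (a, i)) :
    a ∈ A ∧ 0 < i ∧ i < ℓ ∧ x = HNode ℓ a i ∧ z = HNode ℓ a (i + 1) := by
  obtain ⟨b, hb, j, hj, hp⟩ := mem_HArcs_iff.mp h
  injection hp with hx1 hz1
  have hx' : HNode ℓ b j = Sum.inr (a, i) := by rw [← hx1]; exact hx
  obtain ⟨rfl, rfl, hj0, -⟩ := HNode_eq_inr hx'
  exact ⟨hb, Nat.pos_of_ne_zero hj0, hj, hx1, hz1⟩

/-- Structure of an arc of `H'(ℓ)` leaving an original vertex. -/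
lemma arc_inl {x z : V ⊕ ((V × V) × ℕ)} {w : V}
    (h : (x, z) ∈ HArcs A ℓ) (hx : x = Sum.inl w) :
    ∃ a ∈ A, a.1 = w ∧ x = HNode ℓ a 0 ∧ z = HNode ℓ a 1 := by
  obtain ⟨b, hb, j, hj, hp⟩ := mem_HArcs_iff.mp h
  injection hp with hx1 hz1
  have hj0 : j = 0 := by
    by_contra h0
    rw [hx, HNode_mid h0 (by omega) b] at hx1
    exact absurd hx1 (by simp)
  subst hj0
  have : Sum.inl (α := V) (β := (V × V) × ℕ) w = Sum.inl b.1 := by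
    rw [← hx, hx1, HNode_zero]
  exact ⟨b, hb, (Sum.inl.inj this).symm, hx1, hz1⟩

/-- If the whole path `P_a` avoids `F'`, then in `H'(ℓ) \ F'` there is a
directed walk from `inl a.1` to `inl a.2`. -/
lemma path_transGen (hℓ : 1 ≤ ℓ) {a : V × V} (ha : a ∈ A)
    (hdisj : ∀ p ∈ PathArcs ℓ a, p ∉ F') :
    Relation.TransGen (fun x y => (x, y) ∈ HArcs A ℓ \ F')
      (Sum.inl a.1) (Sum.inl a.2) := by
  have key : ∀ i, i ≤ ℓ → 1 ≤ i →
      Relation.TransGen (fun x y => (x, y) ∈ HArcs A ℓ \ F')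
        (HNode ℓ a 0) (HNode ℓ a i) := by
    intro i
    induction i with
    | zero => omega
    | succ n ih =>
      intro hle _
      have harc : (HNode ℓ a n, HNode ℓ a (n + 1)) ∈ HArcs A ℓ \ F' :=
        ⟨mem_HArcs_iff.mpr ⟨a, ha, n, by omega, rfl⟩, hdisj _ ⟨n, by omega, rfl⟩⟩
      rcases Nat.eq_zero_or_pos n with h0 | hpos
      · subst h0; exact Relation.TransGen.single harc
      · exact (ih (by omega) hpos).tail harc
  have := key ℓ le_rfl hℓ
  rwa [HNode_zero, HNode_last hℓ] at this

/-- A cycle of `G \ F` lifts to a cycle of `H'(ℓ) \ F'`. -/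
lemma transGen_lift (hℓ : 1 ≤ ℓ) {u w : V}
    (h : Relation.TransGen
      (fun p q => (p, q) ∈ A \ {a : V × V | a ∈ A ∧ (F' ∩ PathArcs ℓ a).Nonempty}) u w) :
    Relation.TransGen (fun x y => (x, y) ∈ HArcs A ℓ \ F')
      (Sum.inl u) (Sum.inl w) := by
  induction h with
  | single h =>
    obtain ⟨hmem, hnot⟩ := h
    exact path_transGen hℓ hmem fun p hp hpF => hnot ⟨hmem, p, hpF, hp⟩
  | tail h h2 ih =>
    obtain ⟨hmem, hnot⟩ := h2
    exact ih.trans (path_transGen hℓ hmem fun p hp hpF => hnot ⟨hmem, p, hpF, hp⟩)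

/-- Invariant along a walk of `H'(ℓ) \ F'` starting at an original vertex. -/
lemma walk_invariant (hℓ : 1 ≤ ℓ) {u : V} {y : V ⊕ ((V × V) × ℕ)}
    (h : Relation.TransGen (fun x y => (x, y) ∈ HArcs A ℓ \ F') (Sum.inl u) y) :
    (∀ w, y = Sum.inl w → Relation.TransGen
        (fun p q => (p, q) ∈ A \ {a : V × V | a ∈ A ∧ (F' ∩ PathArcs ℓ a).Nonempty}) u w) ∧
    (∀ a i, y = Sum.inr (a, i) → a ∈ A ∧ 0 < i ∧ i < ℓ ∧
      Relation.ReflTransGen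
        (fun p q => (p, q) ∈ A \ {a : V × V | a ∈ A ∧ (F' ∩ PathArcs ℓ a).Nonempty}) u a.1 ∧
      ∀ j < i, (HNode ℓ a j, HNode ℓ a (j + 1)) ∉ F') := by
  set rG := fun p q =>
      (p, q) ∈ A \ {a : V × V | a ∈ A ∧ (F' ∩ PathArcs ℓ a).Nonempty} with hrG
  have step : ∀ y z : V ⊕ ((V × V) × ℕ),
      ((∀ w, y = Sum.inl w → Relation.ReflTransGen rG u w) ∧
       (∀ a i, y = Sum.inr (a, i) → a ∈ A ∧ 0 < i ∧ i < ℓ ∧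
          Relation.ReflTransGen rG u a.1 ∧
          ∀ j < i, (HNode ℓ a j, HNode ℓ a (j + 1)) ∉ F')) →
      (y, z) ∈ HArcs A ℓ \ F' →
      (∀ w, z = Sum.inl w → Relation.TransGen rG u w) ∧
      (∀ a i, z = Sum.inr (a, i) → a ∈ A ∧ 0 < i ∧ i < ℓ ∧
          Relation.ReflTransGen rG u a.1 ∧
          ∀ j < i, (HNode ℓ a j, HNode ℓ a (j + 1)) ∉ F') := by
    rintro y z pre ⟨hH, hzF⟩
    -- common continuation: at position `a`, `i`, with `y = HNode ℓ a i`,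
    -- `z = HNode ℓ a (i+1)`, `ReflTransGen rG u a.1`, prefix of `P_a` avoided
    suffices cont : ∀ (a : V × V) (i : ℕ), a ∈ A → i < ℓ →
        y = HNode ℓ a i → z = HNode ℓ a (i + 1) →
        Relation.ReflTransGen rG u a.1 →
        (∀ j < i, (HNode ℓ a j, HNode ℓ a (j + 1)) ∉ F') →
        (∀ w, z = Sum.inl w → Relation.TransGen rG u w) ∧
        (∀ a i, z = Sum.inr (a, i) → a ∈ A ∧ 0 < i ∧ i < ℓ ∧
            Relation.ReflTransGen rG u a.1 ∧
            ∀ j < i, (HNode ℓ a j, HNode ℓ a (j + 1)) ∉ F') by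
      cases hy : y with
      | inl w =>
        obtain ⟨a, ha, ha1, hy0, hz1⟩ := arc_inl hH hy
        exact cont a 0 ha (by omega) hy0 hz1 (ha1 ▸ pre.1 w hy) (by omega)
      | inr ai =>
        obtain ⟨ha, hipos, hilt, hyi, hzi⟩ := arc_inr hH hy
        obtain ⟨-, -, -, hrt, hpref⟩ := pre.2 ai.1 ai.2 (by rw [hy])
        exact cont ai.1 ai.2 ha hilt hyi hzi hrt hpref
    intro a i ha hilt hyi hzi hrt hpref
    have harcF : (HNode ℓ a i, HNode ℓ a (i + 1)) ∉ F' := by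
      rw [← hyi, ← hzi]; exact hzF
    have hprefall : ∀ j < i + 1, (HNode ℓ a j, HNode ℓ a (j + 1)) ∉ F' := by
      intro j hj
      rcases Nat.lt_succ_iff_lt_or_eq.mp hj with hj' | rfl
      · exact hpref j hj'
      · exact harcF
    by_cases hend : i + 1 = ℓ
    · -- completed the whole path: `z = inl a.2` and `a ∉ F`
      have hz2 : z = Sum.inl a.2 := by rw [hzi, hend, HNode_last hℓ]
      have hrGa : rG a.1 a.2 := by
        simp only [hrG, Set.mem_diff, Set.mem_setOf_eq]
        refine ⟨ha, fun hc => ?_⟩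
        obtain ⟨p, hpF, j, hjlt, rfl⟩ := hc.2
        exact hprefall j (by omega) hpF
      refine ⟨?_, ?_⟩
      · intro w' hw'
        rw [hz2] at hw'
        obtain rfl : a.2 = w' := Sum.inl.inj hw'
        exact Relation.TransGen.tail' hrt hrGa
      · intro b k hbk
        rw [hz2] at hbk; exact absurd hbk (by simp)
    · -- still inside the path: `z = inr (a, i+1)`
      have hz2 : z = Sum.inr (a, i + 1) := by
        rw [hzi, HNode_mid (by omega) hend a]
      refine ⟨?_, ?_⟩
      · intro w' hw'; rw [hz2] at hw'; exact absurd hw' (by simp)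
      · intro b k hbk
        rw [hz2] at hbk
        simp only [Sum.inr.injEq, Prod.mk.injEq] at hbk
        obtain ⟨rfl, rfl⟩ := hbk
        exact ⟨ha, by omega, by omega, hrt, hprefall⟩
  induction h with
  | single h =>
    refine step _ _ ⟨fun w hw => ?_, fun a i hai => absurd hai (by simp)⟩ h
    obtain rfl := Sum.inl.inj hw
    exact Relation.ReflTransGen.refl
  | tail h h2 ih =>
    exact step _ _ ⟨fun w hw => (ih.1 w hw).to_reflTransGen, ih.2⟩ h2

/-- Any cycle of `H'(ℓ) \ F'` through a subdivision vertex passes through an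
original vertex. -/
lemma passes_inl {x y : V ⊕ ((V × V) × ℕ)}
    (h : Relation.TransGen (fun x y => (x, y) ∈ HArcs A ℓ \ F') x y) :
    ∀ a i, x = Sum.inr (a, i) →
      (∃ v, Relation.ReflTransGen (fun x y => (x, y) ∈ HArcs A ℓ \ F') x (Sum.inl v) ∧
        Relation.ReflTransGen (fun x y => (x, y) ∈ HArcs A ℓ \ F') (Sum.inl v) y) ∨
      ∃ j, i < j ∧ y = Sum.inr (a, j) := by
  induction h using Relation.TransGen.head_induction_on with
  | single h =>
    intro a i hx
    obtain ⟨ha, hipos, hilt, hxi, hyi⟩ := arc_inr h.1 hx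
    by_cases hend : i + 1 = ℓ
    · have hy2 : y = Sum.inl a.2 := by
        rw [hyi, hend, HNode_last (by omega) a]
      subst hy2
      exact Or.inl ⟨a.2, Relation.ReflTransGen.single h, Relation.ReflTransGen.refl⟩
    · exact Or.inr ⟨i + 1, by omega, by rw [hyi, HNode_mid (by omega) hend a]⟩
  | head h' htrans ih =>
    intro a i hx
    obtain ⟨ha, hipos, hilt, hxi, hci⟩ := arc_inr h'.1 hx
    by_cases hend : i + 1 = ℓ
    · have hc2 := hci
      rw [hend, HNode_last (by omega) a] at hc2
      subst hc2
      exact Or.inl ⟨a.2, Relation.ReflTransGen.single h', htrans.to_reflTransGen⟩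
    · have hc2 := hci
      rw [HNode_mid (by omega) hend a] at hc2
      rcases ih a (i + 1) hc2 with ⟨v, h1, h2⟩ | ⟨j, hj, hy⟩
      · exact Or.inl ⟨v, h1.head h', h2⟩
      · exact Or.inr ⟨j, by omega, hy⟩

/-- A cycle of `H'(ℓ) \ F'` projects to a cycle of `G \ F`. -/
lemma cycle_of_cycleH (hℓ : 1 ≤ ℓ) {x : V ⊕ ((V × V) × ℕ)}
    (h : Relation.TransGen (fun x y => (x, y) ∈ HArcs A ℓ \ F') x x) :
    ∃ v : V, Relation.TransGen
      (fun p q => (p, q) ∈ A \ {a : V × V | a ∈ A ∧ (F' ∩ PathArcs ℓ a).Nonempty}) v v := by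
  suffices hinl : ∃ v : V,
      Relation.TransGen (fun x y => (x, y) ∈ HArcs A ℓ \ F') (Sum.inl v) (Sum.inl v) by
    obtain ⟨v, hv⟩ := hinl
    exact ⟨v, (walk_invariant hℓ hv).1 v rfl⟩
  cases hx : x with
  | inl v => exact ⟨v, hx ▸ h⟩
  | inr ai =>
    rcases passes_inl h ai.1 ai.2 (by rw [hx]) with ⟨v, h1, h2⟩ | ⟨j, hj, hy⟩
    · refine ⟨v, Relation.TransGen.trans_right h2 ?_⟩
      rcases (Relation.reflTransGen_iff_eq_or_transGen.mp h1) with heq | ht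
      · rw [hx] at heq; exact absurd heq (by simp)
      · exact ht
    · rw [hx] at hy
      have h2 := congrArg Prod.snd (Sum.inr.inj hy)
      simp only at h2
      omega

end Aux


/-- a subset `F'` of the arcs of `H'(ℓ)` is a feedback arc set of
`H'(ℓ)` iff `{a ∈ A : F' ∩ P_a ≠ ∅}` is a feedback arc set of `G`. -/
theorem fas_subdivision_iff {V : Type*} [Fintype V] (A : Set (V × V))
    (hloopless : ∀ v : V, (v, v) ∉ A) (ℓ : ℕ) (hℓ : 1 ≤ ℓ)
    (F' : Set ((V ⊕ ((V × V) × ℕ)) × (V ⊕ ((V × V) × ℕ))))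
    (hF' : F' ⊆ HArcs A ℓ) :
    IsFAS (HArcs A ℓ) F' ↔
      IsFAS A {a : V × V | a ∈ A ∧ (F' ∩ PathArcs ℓ a).Nonempty} := by
  constructor
  · rintro ⟨-, hac⟩
    refine ⟨fun a ha => ha.1, fun v hv => ?_⟩
    have := transGen_lift hℓ hv
    exact hac (Sum.inl v) this
  · rintro ⟨-, hac⟩
    refine ⟨hF', fun x hx => ?_⟩
    obtain ⟨v, hv⟩ := cycle_of_cycleH hℓ hx
    exact hac v hv
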